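/- Let W be a complex vector space, σ a conjugate-linear involution on W, q, m, r, n ∈ ℕ, and ζ ∈ ℝ with 0 < ζ ≤ 1. Let x : Fin q → W with σ(x k) = x k for all k and l : Fin m → W. Let L := Submodule.span ℂ (Set.range x ∪ Set.range l), and assume Submodule.span ℂ (Set.range x) = L ⊓ Submodule.map σ L, finrank_ℂ(L ⊓ Submodule.map σ L) = r, and finrank_ℂ L = n + r. Fix K₀ : Fin r → Fin q and J₀ : Fin n → Fin m. Let B₀ : Fin (r + 2n) → W be the concatenation of x ∘ K₀, (fun j => (2:ℂ) • Re(l (J₀ j))), and (fun j => (2:ℂ) • Im(l (J₀ j))), and let w : Fin (q + 2m) → W be the concatenation of x, (fun j => (2:ℂ) • Re(l j)), and (fun j => (2:ℂ) • Im(l j)). Assume: (a) B₀ is linearly independent over ℝ (W regarded as a real vector space); and (b) for every P : Fin (r + 2n) → Fin (q + 2m) and every alternating ℝ-multilinear map ψ : AlternatingMap ℝ W ℝ (Fin (r+2n)), |ψ(w ∘ P)| ≤ ζ⁻¹ · |ψ(B₀)|. Then: (1) the tuple T₀ : Fin (r + n) → W obtained by concatenating x ∘ K₀ and l ∘ J₀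 is ℂ-linearly independent; and (2) for every r₁, n₁ with r₁ + n₁ = r + n, every K : Fin r₁ → Fin q, every J : Fin n₁ → Fin m, and every alternating ℂ-multilinear map φ : AlternatingMap ℂ W ℂ (Fin (r+n)), ‖φ(x ∘ K, l ∘ J)‖ ≤ (4 · ζ⁻¹ · Real.sqrt (n + r))^(n + r) · ‖φ(T₀)‖. -/

import Mathlib

open Submodule

/-- The real part of a vector with respect to a conjugate-linear involution `σ`:
`Re v := (1/2 : ℂ) • (v + σ v)`. -/
noncomputable def conjRe {W : Type*} [AddCommGroup W] [Module ℂ W]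
    (σ : W →ₛₗ[starRingEnd ℂ] W) (v : W) : W :=
  ((1 : ℂ) / 2) • (v + σ v)

/-- The imaginary part of a vector with respect to a conjugate-linear involution `σ`:
`Im v := (-I/2) • (v - σ v)`. -/
noncomputable def conjIm {W : Type*} [AddCommGroup W] [Module ℂ W]
    (σ : W →ₛₗ[starRingEnd ℂ] W) (v : W) : W :=
  (-(Complex.I) / 2) • (v - σ v)

section Helpers
open Function
open scoped ComplexOrder


variable {R M N : Type*}

/-- Fixing the last argument of an alternating map yields an alternating map. -/
def altSnocFix [CommSemiring R] [AddCommMonoid M] [Module R M] [AddCommMonoid N] [Module R N]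
    {d : ℕ} (g : M [⋀^Fin (d+1)]→ₗ[R] N) (c : M) : M [⋀^Fin d]→ₗ[R] N where
  toFun y := g (Fin.snoc y c)
  map_update_add' := by
    intro dec y i a b
    cases Subsingleton.elim dec (instDecidableEqFin d)
    simp only [Fin.snoc_update, AlternatingMap.map_update_add]
  map_update_smul' := by
    intro dec y i a z
    cases Subsingleton.elim dec (instDecidableEqFin d)
    simp only [Fin.snoc_update, AlternatingMap.map_update_smul]
  map_eq_zero_of_eq' y i j hy hij :=
    g.map_eq_zero_of_eq (Fin.snoc y c) (i := i.castSucc) (j := j.castSucc)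
      (by simpa using hy) (by simpa using hij)

@[simp] lemma altSnocFix_apply [CommSemiring R] [AddCommMonoid M] [Module R M] [AddCommMonoid N]
    [Module R N] {d : ℕ} (g : M [⋀^Fin (d+1)]→ₗ[R] N) (c : M) (y : Fin d → M) :
    altSnocFix g c y = g (Fin.snoc y c) := rfl

section Field
variable {K W : Type*} [Field K] [AddCommGroup W] [Module K W]

lemma exists_alt_one {d : ℕ} {B : Fin d → W} (li : LinearIndependent K B) :
    ∃ ψ : W [⋀^Fin d]→ₗ[K] K, ψ B = 1 := by
  classical
  set V := Submodule.span K (Set.range B) with hV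
  obtain ⟨V', hV'⟩ := V.exists_isCompl
  let π := V.projectionOnto V' hV'
  let e : Module.Basis (Fin d) K V := Module.Basis.span li
  refine ⟨e.det.compLinearMap π, ?_⟩
  have hπ : (fun i => π (B i)) = e := by
    funext i
    have hmem : B i ∈ V := Submodule.subset_span (Set.mem_range_self i)
    have : π (B i) = π ((⟨B i, hmem⟩ : V) : W) := rfl
    rw [this, Submodule.projectionOnto_apply_left]
    exact (Module.Basis.span_apply li i).symm
  rw [AlternatingMap.compLinearMap_apply]
  change e.det (fun i => π (B i)) = 1
  rw [hπ, Module.Basis.det_self]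

/-- If `v` lies "within `C` of `B`" in the sense of all alternating forms, then `v` is in the
span of `B` with all coordinates bounded (in a given absolute value) by `C`. -/
lemma coords_of_forall_le {d : ℕ} {B : Fin d → W} (li : LinearIndependent K B) (v : W)
    (hd : 0 < d) (f : AbsoluteValue K ℝ) {C : ℝ}
    (H : ∀ (α : Fin d) (ψ : W [⋀^Fin d]→ₗ[K] K),
      f (ψ (Function.update B α v)) ≤ C * f (ψ B)) :
    ∃ c : Fin d → K, v = ∑ α, c α • B α ∧ ∀ α, f (c α) ≤ C := by
  classical
  -- Step 1: v ∈ span K (range B)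
  have hvmem : v ∈ Submodule.span K (Set.range B) := by
    by_contra hv
    set α₀ : Fin d := ⟨0, hd⟩
    have li' : LinearIndependent K (Fin.snoc B v : Fin (d+1) → W) :=
      linearIndependent_fin_snoc.2 ⟨li, hv⟩
    set V := Submodule.span K (Set.range (Fin.snoc B v : Fin (d+1) → W)) with hVdef
    obtain ⟨V', hV'⟩ := V.exists_isCompl
    let π := V.projectionOnto V' hV'
    let e : Module.Basis (Fin (d+1)) K V := Module.Basis.span li'
    have hπ : ∀ i : Fin (d+1), π ((Fin.snoc B v : Fin (d+1) → W) i) = e i := by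
      intro i
      have hmem : (Fin.snoc B v : Fin (d+1) → W) i ∈ V := Submodule.subset_span (Set.mem_range_self i)
      have : π ((Fin.snoc B v : Fin (d+1) → W) i) = π ((⟨_, hmem⟩ : V) : W) := rfl
      rw [this, Submodule.projectionOnto_apply_left]
      exact (Module.Basis.span_apply li' i).symm
    have hπB : ∀ i : Fin d, π (B i) = e i.castSucc := by
      intro i
      have := hπ i.castSucc
      rwa [Fin.snoc_castSucc] at this
    have hπv : π v = e (Fin.last d) := by
      have := hπ (Fin.last d)
      rwa [Fin.snoc_last] at this
    set ψ : W [⋀^Fin d]→ₗ[K] K := altSnocFix (e.det.compLinearMap π) (B α₀) with hψ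
    have hψB : ψ B = 0 := by
      rw [hψ, altSnocFix_apply, AlternatingMap.compLinearMap_apply]
      refine AlternatingMap.map_eq_zero_of_eq _ _ (i := α₀.castSucc) (j := Fin.last d) ?_ ?_
      · simp only [Function.comp_apply, Fin.snoc_castSucc, Fin.snoc_last]
      · exact Fin.ne_of_lt (Fin.castSucc_lt_last α₀)
    have hψu : ψ (Function.update B α₀ v) = e.det (e ∘ Equiv.swap α₀.castSucc (Fin.last d)) := by
      rw [hψ, altSnocFix_apply, AlternatingMap.compLinearMap_apply]
      congr 1
      funext j
      refine Fin.lastCases ?_ (fun j => ?_) j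
      · simp only [Function.comp_apply, Fin.snoc_last, Equiv.swap_apply_right, hπB]
      · simp only [Function.comp_apply, Fin.snoc_castSucc]
        by_cases hj : j = α₀
        · subst hj
          simp only [Function.update_self, Equiv.swap_apply_left, hπv]
        · rw [Function.update_of_ne hj, Equiv.swap_apply_of_ne_of_ne
            (by simpa using hj) (Fin.ne_of_lt (Fin.castSucc_lt_last j)), hπB]
    have hdet := AlternatingMap.map_perm e.det e (Equiv.swap α₀.castSucc (Fin.last d))
    have hswap : Equiv.Perm.sign (Equiv.swap α₀.castSucc (Fin.last d)) = -1 :=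
      Equiv.Perm.sign_swap (Fin.ne_of_lt (Fin.castSucc_lt_last α₀))
    have hval : ψ (Function.update B α₀ v) = -1 := by
      rw [hψu, hdet, hswap, Module.Basis.det_self]
      simp
    have := H α₀ ψ
    rw [hψB, hval, f.map_zero, mul_zero] at this
    have h1 : f (-1) = 1 := by rw [f.map_neg, f.map_one]
    rw [h1] at this
    linarith
  -- Step 2: representation
  rw [mem_span_range_iff_exists_fun] at hvmem
  obtain ⟨c, hc⟩ := hvmem
  refine ⟨c, hc.symm, fun α => ?_⟩
  obtain ⟨ψ₀, hψ₀⟩ := exists_alt_one li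
  have hval : ψ₀ (Function.update B α v) = c α := by
    rw [← hc, AlternatingMap.map_update_sum]
    rw [Finset.sum_eq_single α]
    · rw [AlternatingMap.map_update_smul, Function.update_eq_self, hψ₀, smul_eq_mul, mul_one]
    · intro i _ hi
      rw [AlternatingMap.map_update_smul]
      have : ψ₀ (Function.update B α (B i)) = 0 := by
        refine AlternatingMap.map_eq_zero_of_eq _ _ (i := i) (j := α) ?_ hi
        rw [Function.update_of_ne hi, Function.update_self]
      rw [this, smul_zero]
    · intro h
      exact absurd (Finset.mem_univ α) h
  have := H α ψ₀
  rwa [hval, hψ₀, map_one, mul_one] at this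

end Field


lemma linearIndependent_complex_of_fixed {W : Type*} [AddCommGroup W] [Module ℂ W]
    (σ : W →ₛₗ[starRingEnd ℂ] W) {d : ℕ} {B : Fin d → W} (hfix : ∀ i, σ (B i) = B i)
    (li : LinearIndependent ℝ B) : LinearIndependent ℂ B := by
  rw [Fintype.linearIndependent_iff] at li ⊢
  intro g hg i
  have hσg : ∑ j, (starRingEnd ℂ) (g j) • B j = 0 := by
    have h2 := congrArg σ hg
    rw [map_sum, map_zero] at h2
    simpa only [LinearMap.map_smulₛₗ, hfix] using h2
  have hre : ∀ j, (g j).re = 0 := by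
    have h3 : ∑ j, (g j + (starRingEnd ℂ) (g j)) • B j = 0 := by
      simp only [add_smul, Finset.sum_add_distrib, hg, hσg, add_zero]
    have h4 : ∑ j, (2 * (g j).re) • B j = 0 := by
      rw [← h3]
      refine Finset.sum_congr rfl fun j _ => ?_
      rw [Complex.add_conj, ← Complex.coe_smul]
    intro j
    have := li (fun j => 2 * (g j).re) h4 j
    linarith
  have him : ∀ j, (g j).im = 0 := by
    have h3 : ∑ j, (g j - (starRingEnd ℂ) (g j)) • B j = 0 := by
      simp only [sub_smul, Finset.sum_sub_distrib, hg, hσg, sub_zero]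
    have h4 : ∑ j, ((g j).im : ℝ) • B j = 0 := by
      have h5 := congrArg (fun v => (-(Complex.I)/2) • v) h3
      simp only [Finset.smul_sum, smul_smul, smul_zero] at h5
      rw [← h5]
      refine Finset.sum_congr rfl fun j _ => ?_
      rw [← Complex.coe_smul]
      congr 1
      rw [Complex.sub_conj]
      push_cast
      linear_combination (((g j).im : ℂ)) * Complex.I_sq
    exact fun j => li (fun j => (g j).im) h4 j
  exact Complex.ext (hre i) (him i)

/-- compatibility: the complex absolute value as a bundled absolute value -/
noncomputable def Complex.abs : AbsoluteValue ℂ ℝ :=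
  IsAbsoluteValue.toAbsoluteValue (‖·‖ : ℂ → ℝ)

lemma Complex.norm_eq_abs (z : ℂ) : ‖z‖ = Complex.abs z := rfl

lemma Complex.sq_abs (z : ℂ) : Complex.abs z ^ 2 = Complex.normSq z := Complex.sq_norm z

lemma Complex.abs_ofReal (r : ℝ) : Complex.abs (r : ℂ) = |r| := Complex.norm_real r

lemma Complex.abs_I : Complex.abs Complex.I = 1 := Complex.norm_I

lemma Complex.abs_two : Complex.abs 2 = 2 := Complex.norm_two

lemma abs_det_le_of_entries_le {N : ℕ} (hN : 0 < N) (M : Matrix (Fin N) (Fin N) ℂ)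
    {ρ : ℝ} (hρ : 0 ≤ ρ) (h : ∀ i j, Complex.abs (M i j) ≤ ρ) :
    Complex.abs M.det ≤ (Real.sqrt N * ρ) ^ N := by
  classical
  set A := M.conjTranspose * M with hA
  have hps : A.PosSemidef := Matrix.posSemidef_conjTranspose_mul_self M
  have hherm := hps.1
  set lam := hherm.eigenvalues with hlam
  have hnn : ∀ i, 0 ≤ lam i := hps.eigenvalues_nonneg
  -- `det A = |det M|²`
  have hdetA : A.det = ((Complex.abs M.det : ℝ) : ℂ) ^ 2 := by
    rw [hA, Matrix.det_mul, Matrix.det_conjTranspose]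
    rw [Complex.star_def, ← Complex.normSq_eq_conj_mul_self, ← Complex.sq_abs]
    push_cast
    ring
  have hprod : ∏ i, lam i = (Complex.abs M.det) ^ 2 := by
    have h0 := hherm.det_eq_prod_eigenvalues
    rw [hdetA] at h0
    apply Complex.ofReal_injective
    rw [hlam]
    push_cast
    exact h0.symm
  -- trace = sum of eigenvalues
  have htr : A.trace = ∑ i, (lam i : ℂ) := by
    exact hherm.trace_eq_sum_eigenvalues
  have hsum : ∑ i, lam i ≤ N * (N * ρ ^ 2) := by
    have htr2 : ((∑ i, lam i : ℝ) : ℂ) = ∑ i, ∑ j, ((Complex.normSq (M j i) : ℝ) : ℂ) := by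
      push_cast
      rw [← htr, hA]
      rw [Matrix.trace]
      refine Finset.sum_congr rfl fun i _ => ?_
      rw [Matrix.diag_apply, Matrix.mul_apply]
      refine Finset.sum_congr rfl fun j _ => ?_
      rw [Matrix.conjTranspose_apply, Complex.star_def, ← Complex.normSq_eq_conj_mul_self]
    have htr3 : ∑ i, lam i = ∑ i : Fin N, ∑ j : Fin N, Complex.normSq (M j i) := by
      exact_mod_cast htr2
    rw [htr3]
    calc ∑ i : Fin N, ∑ j : Fin N, Complex.normSq (M j i)
        ≤ ∑ _i : Fin N, ∑ _j : Fin N, ρ ^ 2 := by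
          refine Finset.sum_le_sum fun i _ => Finset.sum_le_sum fun j _ => ?_
          rw [← Complex.sq_abs]
          exact pow_le_pow_left₀ (Complex.abs.nonneg _) (h j i) 2
      _ = N * (N * ρ ^ 2) := by simp [Finset.sum_const, mul_assoc]
  -- AM-GM
  have hamgm : ∏ i, lam i ≤ (N * ρ ^ 2) ^ N := by
    have hw : ∀ i ∈ (Finset.univ : Finset (Fin N)), (0:ℝ) ≤ (N:ℝ)⁻¹ := fun _ _ => by positivity
    have hw' : ∑ _i : Fin N, (N:ℝ)⁻¹ = 1 := by
      rw [Finset.sum_const, Finset.card_univ, Fintype.card_fin, nsmul_eq_mul]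
      field_simp
    have hgm := Real.geom_mean_le_arith_mean_weighted Finset.univ (fun _ => (N:ℝ)⁻¹) lam hw hw'
      (fun i _ => hnn i)
    have hP : (0:ℝ) ≤ ∏ i, lam i ^ ((N:ℝ)⁻¹) :=
      Finset.prod_nonneg fun i _ => Real.rpow_nonneg (hnn i) _
    have key : ∏ i, lam i = (∏ i, lam i ^ ((N:ℝ)⁻¹)) ^ N := by
      rw [← Finset.prod_pow]
      refine (Finset.prod_congr rfl fun i _ => ?_).symm
      rw [← Real.rpow_natCast (lam i ^ ((N:ℝ)⁻¹)) N, ← Real.rpow_mul (hnn i)]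
      rw [inv_mul_cancel₀ (by exact_mod_cast hN.ne' : (N:ℝ) ≠ 0), Real.rpow_one]
    rw [key]
    calc (∏ i, lam i ^ ((N:ℝ)⁻¹)) ^ N ≤ (∑ i, (N:ℝ)⁻¹ * lam i) ^ N :=
          pow_le_pow_left₀ hP hgm N
      _ ≤ (N * ρ ^ 2) ^ N := by
          refine pow_le_pow_left₀ (Finset.sum_nonneg fun i _ => mul_nonneg (by positivity) (hnn i)) ?_ N
          rw [← Finset.mul_sum]
          calc (N:ℝ)⁻¹ * ∑ i, lam i ≤ (N:ℝ)⁻¹ * (N * (N * ρ^2)) := by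
                exact mul_le_mul_of_nonneg_left hsum (by positivity)
            _ = N * ρ^2 := by
                field_simp
    
  have hsq : (Complex.abs M.det) ^ 2 ≤ ((Real.sqrt N * ρ) ^ N) ^ 2 := by
    rw [← hprod]
    calc ∏ i, lam i ≤ (N * ρ^2) ^ N := hamgm
      _ = ((Real.sqrt N * ρ) ^ N) ^ 2 := by
          rw [← pow_mul, mul_comm N 2, pow_mul]
          congr 1
          rw [mul_pow, Real.sq_sqrt (by positivity : (0:ℝ) ≤ (N:ℝ))]
  have hb : (0:ℝ) ≤ (Real.sqrt N * ρ) ^ N := by positivity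
  exact (pow_le_pow_iff_left₀ (Complex.abs.nonneg _) hb (by norm_num)).mp hsq

/-- decomposition helper -/
lemma smul_helperI {W : Type*} [AddCommGroup W] [Module ℂ W] (a b : ℂ) (u v : W) :
    a • (u + v) + b • ((-Complex.I) • (u - v)) =
      (a - Complex.I * b) • u + (a + Complex.I * b) • v := by
  rw [smul_smul]
  module

end Helpers

/-- Proposition on quotients of wedge products, real ⇒ complex direction.
If the real tuple `B₀ = (x∘K₀, 2 Re(l∘J₀), 2 Im(l∘J₀))` is ℝ-linearly independent and every
alternating ℝ-multilinear form `ψ` satisfies `|ψ(w ∘ P)| ≤ ζ⁻¹ |ψ(B₀)|` for all `P`, then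
the tuple `T₀ = (x∘K₀, l∘J₀)` is ℂ-linearly independent and every alternating
ℂ-multilinear form `φ` satisfies `‖φ(x∘K, l∘J)‖ ≤ (4 ζ⁻¹ √(n+r))^(n+r) ‖φ(T₀)‖` for all
concatenations of total length `r + n`. -/
theorem wedge_quotient_real_to_complex
    (W : Type*) [AddCommGroup W] [Module ℂ W]
    (σ : W →ₛₗ[starRingEnd ℂ] W) (hinv : ∀ w : W, σ (σ w) = w)
    (q m r n : ℕ) (ζ : ℝ) (hζ0 : 0 < ζ) (hζ1 : ζ ≤ 1)
    (x : Fin q → W) (hx : ∀ k, σ (x k) = x k) (l : Fin m → W)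
    (L : Submodule ℂ W) (hL : L = Submodule.span ℂ (Set.range x ∪ Set.range l))
    (hX : Submodule.span ℂ (Set.range x) = L ⊓ Submodule.map σ L)
    (hr : Module.finrank ℂ ↥(L ⊓ Submodule.map σ L) = r)
    (hnr : Module.finrank ℂ ↥L = n + r)
    (K₀ : Fin r → Fin q) (J₀ : Fin n → Fin m)
    (B₀ : Fin (r + n + n) → W)
    (hB₀ : B₀ = Fin.append
      (Fin.append (x ∘ K₀) (fun j => (2 : ℂ) • conjRe σ (l (J₀ j))))
      (fun j => (2 : ℂ) • conjIm σ (l (J₀ j))))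
    (w : Fin (q + m + m) → W)
    (hw : w = Fin.append
      (Fin.append x (fun j => (2 : ℂ) • conjRe σ (l j)))
      (fun j => (2 : ℂ) • conjIm σ (l j)))
    (ha : LinearIndependent ℝ B₀)
    (hb : ∀ (P : Fin (r + n + n) → Fin (q + m + m)) (ψ : W [⋀^Fin (r + n + n)]→ₗ[ℝ] ℝ),
      |ψ (w ∘ P)| ≤ ζ⁻¹ * |ψ B₀|)
    (T₀ : Fin (r + n) → W) (hT₀ : T₀ = Fin.append (x ∘ K₀) (l ∘ J₀)) :
    LinearIndependent ℂ T₀ ∧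
      ∀ (r₁ n₁ : ℕ) (h : r₁ + n₁ = r + n) (K : Fin r₁ → Fin q) (J : Fin n₁ → Fin m)
        (φ : W [⋀^Fin (r + n)]→ₗ[ℂ] ℂ),
        ‖φ (fun i => Fin.append (x ∘ K) (l ∘ J) (Fin.cast h.symm i))‖ ≤
          (4 * ζ⁻¹ * Real.sqrt ((n + r : ℕ) : ℝ)) ^ (n + r) * ‖φ T₀‖ := by
  classical
  have hB1 : ∀ i : Fin r, B₀ (Fin.castAdd n (Fin.castAdd n i)) = x (K₀ i) := by
    intro i; rw [hB₀, Fin.append_left, Fin.append_left]; rfl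
  have hB2 : ∀ j : Fin n, B₀ (Fin.castAdd n (Fin.natAdd r j)) = l (J₀ j) + σ (l (J₀ j)) := by
    intro j; rw [hB₀, Fin.append_left, Fin.append_right, conjRe, smul_smul]
    norm_num
  have hB3 : ∀ j : Fin n, B₀ (Fin.natAdd (r + n) j)
      = (-Complex.I) • (l (J₀ j) - σ (l (J₀ j))) := by
    intro j; rw [hB₀, Fin.append_right, conjIm, smul_smul]
    congr 1
    ring
  have hT1 : ∀ i : Fin r, T₀ (Fin.castAdd n i) = x (K₀ i) := by
    intro i; rw [hT₀, Fin.append_left]; rfl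
  have hT2 : ∀ j : Fin n, T₀ (Fin.natAdd r j) = l (J₀ j) := by
    intro j; rw [hT₀, Fin.append_right]; rfl
  rcases Nat.eq_zero_or_pos (r + n) with hzero | hpos
  · haveI hie : IsEmpty (Fin (r + n)) := ⟨fun i => absurd i.2 (by omega)⟩
    constructor
    · exact linearIndependent_empty_type
    · intro r₁ n₁ h K J φ
      have hfn : (fun i => Fin.append (x ∘ K) (l ∘ J) (Fin.cast h.symm i)) = T₀ :=
        funext fun i => (hie.false i).elim
      rw [hfn]
      have hnr0 : n + r = 0 := by omega
      rw [hnr0, pow_zero, one_mul]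
  · -- main case
    have hd : 0 < r + n + n := by omega
    -- splitting sums over Fin (r+n+n)
    have trisplit : ∀ (f : Fin (r + n + n) → W), ∑ α, f α =
        (∑ i : Fin r, f (Fin.castAdd n (Fin.castAdd n i))) +
        (∑ j : Fin n, f (Fin.castAdd n (Fin.natAdd r j))) +
        (∑ j : Fin n, f (Fin.natAdd (r + n) j)) := by
      intro f
      rw [Fin.sum_univ_add (f := f), Fin.sum_univ_add (f := fun i : Fin (r+n) => f (Fin.castAdd n i))]
    -- components of w
    have hw1 : ∀ k, w (Fin.castAdd m (Fin.castAdd m k)) = x k := by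
      intro k; rw [hw, Fin.append_left, Fin.append_left]
    have hw2 : ∀ j, w (Fin.castAdd m (Fin.natAdd q j)) = l j + σ (l j) := by
      intro j; rw [hw, Fin.append_left, Fin.append_right, conjRe, smul_smul]
      norm_num
    have hw3 : ∀ j, w (Fin.natAdd (q + m) j) = (-Complex.I) • (l j - σ (l j)) := by
      intro j; rw [hw, Fin.append_right, conjIm, smul_smul]
      congr 1
      ring
    -- the base selection P₀ with w ∘ P₀ = B₀
    set P₀ : Fin (r+n+n) → Fin (q+m+m) := Fin.append (Fin.append
        (fun i => Fin.castAdd m (Fin.castAdd m (K₀ i)))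
        (fun j => Fin.castAdd m (Fin.natAdd q (J₀ j))))
        (fun j => Fin.natAdd (q+m) (J₀ j)) with hP₀def
    have hP₀ : ∀ α, w (P₀ α) = B₀ α := by
      intro α
      induction α using Fin.addCases with
      | left β =>
        induction β using Fin.addCases with
        | left i =>
          simp only [hP₀def, Fin.append_left]
          rw [hw1, hB1]
        | right j =>
          simp only [hP₀def, Fin.append_left, Fin.append_right]
          rw [hw2, hB2]
      | right j =>
        simp only [hP₀def, Fin.append_right]
        rw [hw3, hB3]
    -- real coordinates of each component of w in the basis B₀, bounded by ζ⁻¹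
    have hcoordw : ∀ β : Fin (q+m+m), ∃ c : Fin (r+n+n) → ℝ,
        w β = ∑ α, c α • B₀ α ∧ ∀ α, |c α| ≤ ζ⁻¹ := by
      intro β
      refine coords_of_forall_le ha (w β) hd AbsoluteValue.abs ?_
      intro α ψ
      have hcomp : w ∘ (Function.update P₀ α β) = Function.update B₀ α (w β) := by
        have hwp : w ∘ P₀ = B₀ := funext hP₀
        rw [Function.comp_update, hwp]
      have h := hb (Function.update P₀ α β) ψ
      rw [hcomp] at h
      exact h
    -- complex coordinates of x k
    have hxB : ∀ k : Fin q, ∃ c : Fin (r+n+n) → ℂ,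
        x k = ∑ α, c α • B₀ α ∧ ∀ α, Complex.abs (c α) ≤ ζ⁻¹ := by
      intro k
      obtain ⟨c, hc, hcb⟩ := hcoordw (Fin.castAdd m (Fin.castAdd m k))
      rw [hw1] at hc
      refine ⟨fun α => (c α : ℂ), ?_, ?_⟩
      · rw [hc]
        exact Finset.sum_congr rfl fun α _ => (Complex.coe_smul _ _).symm
      · intro α
        rw [Complex.abs_ofReal]
        exact hcb α
    -- complex coordinates of l j
    have hlB : ∀ j : Fin m, ∃ c : Fin (r+n+n) → ℂ,
        l j = ∑ α, c α • B₀ α ∧ ∀ α, Complex.abs (c α) ≤ ζ⁻¹ := by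
      intro j
      obtain ⟨a, hca, hab⟩ := hcoordw (Fin.castAdd m (Fin.natAdd q j))
      obtain ⟨e, hce, heb⟩ := hcoordw (Fin.natAdd (q+m) j)
      rw [hw2] at hca
      rw [hw3] at hce
      have hcaC : l j + σ (l j) = ∑ α, ((a α : ℂ)) • B₀ α := by
        rw [hca]
        exact Finset.sum_congr rfl fun α _ => (Complex.coe_smul _ _).symm
      have hceC : (-Complex.I) • (l j - σ (l j)) = ∑ α, ((e α : ℂ)) • B₀ α := by
        rw [hce]
        exact Finset.sum_congr rfl fun α _ => (Complex.coe_smul _ _).symm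
      refine ⟨fun α => (1/2 : ℂ) * (a α : ℂ) + (Complex.I/2) * (e α : ℂ), ?_, ?_⟩
      · have hval : l j = (1/2 : ℂ) • (l j + σ (l j))
            + (Complex.I/2) • ((-Complex.I) • (l j - σ (l j))) := by
          rw [smul_smul]
          have h2 : (Complex.I/2) * (-Complex.I) = (1/2 : ℂ) := by
            linear_combination (-(1:ℂ)/2) * Complex.I_sq
          rw [h2]
          module
        rw [hval, hcaC, hceC, Finset.smul_sum, Finset.smul_sum, ← Finset.sum_add_distrib]
        refine Finset.sum_congr rfl fun α _ => ?_
        rw [smul_smul, smul_smul, ← add_smul]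
      · intro α
        have h1 := hab α
        have h2 := heb α
        calc Complex.abs ((1/2 : ℂ) * (a α : ℂ) + (Complex.I/2) * (e α : ℂ))
            ≤ Complex.abs ((1/2:ℂ) * (a α:ℂ)) + Complex.abs ((Complex.I/2) * (e α:ℂ)) :=
              Complex.abs.add_le _ _
          _ = (1/2) * |a α| + (1/2) * |e α| := by
              rw [map_mul, map_mul]
              congr 1
              · rw [Complex.abs_ofReal]
                norm_num [Complex.abs_two]
              · rw [Complex.abs_ofReal, map_div₀, Complex.abs_I, Complex.abs_two]
          _ ≤ ζ⁻¹ := by linarith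
    -- the family E
    set E : Fin (r+n+n) → W := Fin.append T₀ (fun j => σ (l (J₀ j))) with hEdef
    have hE1 : ∀ p : Fin (r+n), E (Fin.castAdd n p) = T₀ p := by
      intro p; rw [hEdef, Fin.append_left]
    have hE3 : ∀ j : Fin n, E (Fin.natAdd (r+n) j) = σ (l (J₀ j)) := by
      intro j; rw [hEdef, Fin.append_right]
    -- B₀ in terms of E
    have hBE1 : ∀ i : Fin r, B₀ (Fin.castAdd n (Fin.castAdd n i))
        = E (Fin.castAdd n (Fin.castAdd n i)) := by
      intro i; rw [hB1, hE1, hT1]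
    have hBE2 : ∀ j : Fin n, B₀ (Fin.castAdd n (Fin.natAdd r j))
        = E (Fin.castAdd n (Fin.natAdd r j)) + E (Fin.natAdd (r+n) j) := by
      intro j; rw [hB2, hE1, hE3, hT2]
    have hBE3 : ∀ j : Fin n, B₀ (Fin.natAdd (r+n) j)
        = (-Complex.I) • (E (Fin.castAdd n (Fin.natAdd r j)) - E (Fin.natAdd (r+n) j)) := by
      intro j; rw [hB3, hE1, hE3, hT2]
    -- B₀ is σ-fixed, hence ℂ-linearly independent
    have hfixB : ∀ α, σ (B₀ α) = B₀ α := by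
      intro α
      induction α using Fin.addCases with
      | left β =>
        induction β using Fin.addCases with
        | left i => rw [hB1]; exact hx _
        | right j =>
          rw [hB2, map_add, hinv]
          exact add_comm _ _
      | right j =>
        rw [hB3, LinearMap.map_smulₛₗ, map_sub, hinv]
        have hc : (starRingEnd ℂ) (-Complex.I) = Complex.I := by simp
        rw [hc]
        module
    have hBC : LinearIndependent ℂ B₀ := linearIndependent_complex_of_fixed σ hfixB ha
    -- E is ℂ-linearly independent
    have hEC : LinearIndependent ℂ E := by
      rw [Fintype.linearIndependent_iff]
      intro g hg
      set hh : Fin (r+n+n) → ℂ := Fin.append (Fin.append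
          (fun i => g (Fin.castAdd n (Fin.castAdd n i)))
          (fun j => (1/2 : ℂ) * (g (Fin.castAdd n (Fin.natAdd r j)) + g (Fin.natAdd (r+n) j))))
          (fun j => (Complex.I/2) * (g (Fin.castAdd n (Fin.natAdd r j)) - g (Fin.natAdd (r+n) j)))
        with hhdef
      have key : ∑ α, hh α • B₀ α = ∑ α, g α • E α := by
        rw [trisplit (fun α => hh α • B₀ α), trisplit (fun α => g α • E α)]
        rw [add_assoc, add_assoc]
        congr 1
        · refine Finset.sum_congr rfl fun i _ => ?_
          rw [hhdef, Fin.append_left, Fin.append_left, hBE1]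
        · rw [← Finset.sum_add_distrib, ← Finset.sum_add_distrib]
          refine Finset.sum_congr rfl fun j _ => ?_
          rw [hhdef, Fin.append_left, Fin.append_right, Fin.append_right, hBE2, hBE3,
            smul_helperI]
          congr 1
          · congr 1
            linear_combination (-(g (Fin.castAdd n (Fin.natAdd r j)) - g (Fin.natAdd (r+n) j))/2)
              * Complex.I_sq
          · congr 1
            linear_combination ((g (Fin.castAdd n (Fin.natAdd r j)) - g (Fin.natAdd (r+n) j))/2)
              * Complex.I_sq
      have hz := Fintype.linearIndependent_iff.mp hBC hh (key.trans hg)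
      intro α
      induction α using Fin.addCases with
      | left β =>
        induction β using Fin.addCases with
        | left i =>
          have := hz (Fin.castAdd n (Fin.castAdd n i))
          rwa [hhdef, Fin.append_left, Fin.append_left] at this
        | right j =>
          have h2 := hz (Fin.castAdd n (Fin.natAdd r j))
          have h3 := hz (Fin.natAdd (r+n) j)
          rw [hhdef, Fin.append_left, Fin.append_right] at h2
          rw [hhdef, Fin.append_right] at h3
          linear_combination h2 - Complex.I * h3 +
            ((g (Fin.castAdd n (Fin.natAdd r j)) - g (Fin.natAdd (r+n) j))/2) * Complex.I_sq
      | right j =>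
        have h2 := hz (Fin.castAdd n (Fin.natAdd r j))
        have h3 := hz (Fin.natAdd (r+n) j)
        rw [hhdef, Fin.append_left, Fin.append_right] at h2
        rw [hhdef, Fin.append_right] at h3
        linear_combination h2 + Complex.I * h3 +
          (-(g (Fin.castAdd n (Fin.natAdd r j)) - g (Fin.natAdd (r+n) j))/2) * Complex.I_sq
    -- T₀ is ℂ-linearly independent
    have hTC : LinearIndependent ℂ T₀ := by
      have : T₀ = E ∘ (Fin.castAdd n) := by
        funext p; rw [Function.comp_apply, hE1]
      rw [this]
      exact hEC.comp _ (Fin.castAdd_injective _ _)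
    -- T₀ lands in L
    have hT₀L : ∀ p, T₀ p ∈ L := by
      intro p
      induction p using Fin.addCases with
      | left i =>
        rw [hT1, hL]
        exact subset_span (Set.mem_union_left _ ⟨K₀ i, rfl⟩)
      | right j =>
        rw [hT2, hL]
        exact subset_span (Set.mem_union_right _ ⟨J₀ j, rfl⟩)
    -- basis of L given by T₀
    haveI : Nonempty (Fin (r + n)) := ⟨⟨0, hpos⟩⟩
    have hTL : LinearIndependent ℂ (fun p => (⟨T₀ p, hT₀L p⟩ : L)) := by
      refine LinearIndependent.of_comp L.subtype ?_
      convert hTC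
      rfl
    set b : Module.Basis (Fin (r+n)) ℂ L :=
      basisOfLinearIndependentOfCardEqFinrank hTL (by rw [Fintype.card_fin, hnr, add_comm]) with hbdef
    have hbcoe : ∀ p, (b p : W) = T₀ p := by
      intro p
      rw [hbdef, coe_basisOfLinearIndependentOfCardEqFinrank]
    -- conversion from B₀-coordinates to E-coordinates
    have hconv : ∀ (v : W) (c : Fin (r+n+n) → ℂ), v = ∑ α, c α • B₀ α →
        (∀ α, Complex.abs (c α) ≤ ζ⁻¹) →
        ∃ z : Fin (r+n+n) → ℂ, v = ∑ α, z α • E α ∧ ∀ α, Complex.abs (z α) ≤ 2 * ζ⁻¹ := by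
      intro v c hv hcb
      have hζn : (0:ℝ) ≤ ζ⁻¹ := by positivity
      refine ⟨Fin.append (Fin.append
        (fun i => c (Fin.castAdd n (Fin.castAdd n i)))
        (fun j => c (Fin.castAdd n (Fin.natAdd r j)) - Complex.I * c (Fin.natAdd (r+n) j)))
        (fun j => c (Fin.castAdd n (Fin.natAdd r j)) + Complex.I * c (Fin.natAdd (r+n) j)),
        ?_, ?_⟩
      · rw [hv, trisplit (fun α => c α • B₀ α), trisplit]
        have hfirst : ∀ i : Fin r,
            c (Fin.castAdd n (Fin.castAdd n i)) • B₀ (Fin.castAdd n (Fin.castAdd n i)) =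
            (Fin.append (Fin.append
              (fun i => c (Fin.castAdd n (Fin.castAdd n i)))
              (fun j => c (Fin.castAdd n (Fin.natAdd r j)) - Complex.I * c (Fin.natAdd (r+n) j)))
              (fun j => c (Fin.castAdd n (Fin.natAdd r j)) + Complex.I * c (Fin.natAdd (r+n) j)))
              (Fin.castAdd n (Fin.castAdd n i)) • E (Fin.castAdd n (Fin.castAdd n i)) := by
          intro i
          rw [Fin.append_left, Fin.append_left, hBE1]
        have hmid : ∀ j : Fin n,
            c (Fin.castAdd n (Fin.natAdd r j)) • B₀ (Fin.castAdd n (Fin.natAdd r j)) +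
            c (Fin.natAdd (r+n) j) • B₀ (Fin.natAdd (r+n) j) =
            (c (Fin.castAdd n (Fin.natAdd r j)) - Complex.I * c (Fin.natAdd (r+n) j)) •
              E (Fin.castAdd n (Fin.natAdd r j)) +
            (c (Fin.castAdd n (Fin.natAdd r j)) + Complex.I * c (Fin.natAdd (r+n) j)) •
              E (Fin.natAdd (r+n) j) := by
          intro j
          rw [hBE2, hBE3]
          exact smul_helperI _ _ _ _
        rw [add_assoc, add_assoc]
        congr 1
        · exact Finset.sum_congr rfl fun i _ => hfirst i
        · rw [← Finset.sum_add_distrib, ← Finset.sum_add_distrib]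
          refine Finset.sum_congr rfl fun j _ => ?_
          rw [Fin.append_left, Fin.append_right, Fin.append_right]
          exact hmid j
      · intro α
        induction α using Fin.addCases with
        | left β =>
          induction β using Fin.addCases with
          | left i =>
            rw [Fin.append_left, Fin.append_left]
            calc Complex.abs (c (Fin.castAdd n (Fin.castAdd n i))) ≤ ζ⁻¹ := hcb _
              _ ≤ 2 * ζ⁻¹ := by linarith
          | right j =>
            rw [Fin.append_left, Fin.append_right, sub_eq_add_neg]
            calc Complex.abs (c (Fin.castAdd n (Fin.natAdd r j)) +
                  -(Complex.I * c (Fin.natAdd (r+n) j)))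
                ≤ Complex.abs (c (Fin.castAdd n (Fin.natAdd r j))) +
                  Complex.abs (-(Complex.I * c (Fin.natAdd (r+n) j))) := Complex.abs.add_le _ _
              _ = Complex.abs (c (Fin.castAdd n (Fin.natAdd r j))) +
                  Complex.abs (c (Fin.natAdd (r+n) j)) := by
                  rw [Complex.abs.map_neg, map_mul, Complex.abs_I, one_mul]
              _ ≤ 2 * ζ⁻¹ := by
                  have := hcb (Fin.castAdd n (Fin.natAdd r j))
                  have := hcb (Fin.natAdd (r+n) j)
                  linarith
        | right j =>
          rw [Fin.append_right]
          calc Complex.abs (c (Fin.castAdd n (Fin.natAdd r j)) +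
                Complex.I * c (Fin.natAdd (r+n) j))
              ≤ Complex.abs (c (Fin.castAdd n (Fin.natAdd r j))) +
                Complex.abs (Complex.I * c (Fin.natAdd (r+n) j)) := Complex.abs.add_le _ _
            _ = Complex.abs (c (Fin.castAdd n (Fin.natAdd r j))) +
                Complex.abs (c (Fin.natAdd (r+n) j)) := by
                rw [map_mul, Complex.abs_I, one_mul]
            _ ≤ 2 * ζ⁻¹ := by
                have := hcb (Fin.castAdd n (Fin.natAdd r j))
                have := hcb (Fin.natAdd (r+n) j)
                linarith
    refine ⟨hTC, ?_⟩
    intro r₁ n₁ hsum K J φ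
    set u : Fin (r + n) → W := fun i => Fin.append (x ∘ K) (l ∘ J) (Fin.cast hsum.symm i) with hudef
    have huB : ∀ i, ∃ c : Fin (r+n+n) → ℂ,
        u i = ∑ α, c α • B₀ α ∧ ∀ α, Complex.abs (c α) ≤ ζ⁻¹ := by
      have hgen : ∀ p : Fin (r₁ + n₁), ∃ c : Fin (r+n+n) → ℂ,
          Fin.append (x ∘ K) (l ∘ J) p = ∑ α, c α • B₀ α ∧ ∀ α, Complex.abs (c α) ≤ ζ⁻¹ := by
        intro p
        induction p using Fin.addCases with
        | left i =>
          rw [Fin.append_left, Function.comp_apply]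
          exact hxB (K i)
        | right j =>
          rw [Fin.append_right, Function.comp_apply]
          exact hlB (J j)
      intro i
      rw [hudef]
      exact hgen _
    have huL : ∀ i, u i ∈ L := by
      have hgen : ∀ p : Fin (r₁ + n₁), Fin.append (x ∘ K) (l ∘ J) p ∈ L := by
        intro p
        induction p using Fin.addCases with
        | left i =>
          rw [Fin.append_left, Function.comp_apply, hL]
          exact subset_span (Set.mem_union_left _ ⟨K i, rfl⟩)
        | right j =>
          rw [Fin.append_right, Function.comp_apply, hL]
          exact subset_span (Set.mem_union_right _ ⟨J j, rfl⟩)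
      intro i
      rw [hudef]
      exact hgen _
    -- bounded coordinates in basis b
    have hrepr : ∀ i p, Complex.abs (b.repr ⟨u i, huL i⟩ p) ≤ 2 * ζ⁻¹ := by
      intro i p
      obtain ⟨c, hc, hcb⟩ := huB i
      obtain ⟨z, hz, hzb⟩ := hconv (u i) c hc hcb
      have hrepr_sum : ∑ p, (b.repr ⟨u i, huL i⟩ p) • T₀ p = u i := by
        have h0 := b.sum_repr ⟨u i, huL i⟩
        have h1 := congrArg (L.subtype) h0
        rw [map_sum] at h1
        simpa only [map_smul, Submodule.coe_subtype, hbcoe] using h1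
      set z' : Fin (r+n+n) → ℂ :=
        Fin.append (fun p => (b.repr ⟨u i, huL i⟩ p : ℂ)) (fun _ => (0:ℂ)) with hz'def
      have hz'sum : ∑ α, z' α • E α = u i := by
        rw [Fin.sum_univ_add (f := fun α => z' α • E α)]
        simp only [hz'def, Fin.append_left, Fin.append_right, zero_smul,
          Finset.sum_const_zero, add_zero]
        refine (Finset.sum_congr rfl fun p _ => ?_).trans hrepr_sum
        rw [hE1]
      have hzz : ∀ α, z α = z' α := by
        have hdiff : ∑ α, (z α - z' α) • E α = 0 := by
          simp only [sub_smul, Finset.sum_sub_distrib]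
          rw [← hz, hz'sum, sub_self]
        intro α
        exact sub_eq_zero.mp (Fintype.linearIndependent_iff.mp hEC _ hdiff α)
      have habs := hzb (Fin.castAdd n p)
      rw [hzz (Fin.castAdd n p), hz'def, Fin.append_left] at habs
      exact habs
    -- the determinant identity
    set φL : (↥L) [⋀^Fin (r+n)]→ₗ[ℂ] ℂ := φ.compLinearMap L.subtype with hφLdef
    set u' : Fin (r+n) → L := fun i => ⟨u i, huL i⟩ with hu'def
    have hφu : φ u = (b.toMatrix u').det * φ T₀ := by
      have h1 : φ u = φL u' := by
        rw [hφLdef, AlternatingMap.compLinearMap_apply]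
        rfl
      have h2 := AlternatingMap.eq_smul_basis_det b φL
      have h3 : φL ⇑b = φ T₀ := by
        rw [hφLdef, AlternatingMap.compLinearMap_apply]
        congr 1
        funext p
        exact hbcoe p
      rw [h1, h2]
      rw [AlternatingMap.smul_apply, smul_eq_mul, h3, Module.Basis.det_apply, mul_comm]
    have hdetb : Complex.abs (b.toMatrix u').det ≤ (Real.sqrt ((r+n : ℕ) : ℝ) * (2 * ζ⁻¹)) ^ (r+n) := by
      refine abs_det_le_of_entries_le (ρ := 2 * ζ⁻¹) hpos _ (by positivity) ?_
      intro i j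
      rw [Module.Basis.toMatrix_apply]
      exact hrepr j i
    -- final computation
    rw [add_comm n r]
    calc ‖φ u‖ = Complex.abs (b.toMatrix u').det * ‖φ T₀‖ := by
          rw [hφu, Complex.norm_eq_abs, Complex.norm_eq_abs, map_mul]
      _ ≤ (Real.sqrt ((r+n : ℕ) : ℝ) * (2 * ζ⁻¹)) ^ (r+n) * ‖φ T₀‖ := by
          exact mul_le_mul_of_nonneg_right hdetb (norm_nonneg _)
      _ ≤ (4 * ζ⁻¹ * Real.sqrt ((r + n : ℕ) : ℝ)) ^ (r + n) * ‖φ T₀‖ := by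
          refine mul_le_mul_of_nonneg_right (pow_le_pow_left₀ (by positivity) ?_ _) (norm_nonneg _)
          have h1 : (0:ℝ) ≤ ζ⁻¹ := by positivity
          have h2 : (0:ℝ) ≤ Real.sqrt (r+n) := Real.sqrt_nonneg _
          push_cast
          nlinarith [mul_nonneg h1 h2]
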